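/- Let H ∈ ℝ and c ≠ 0. Then lim_{t → 0⁺} h(t; H, c) = −c/|c|; in particular lim_{t → 0⁺} f'(t; H, c)² = 1, so the rotational surface has a conical-type singularity at the axis: if c < 0 the surface is tangent to the upper light cone at (0, 0, f(0)), and if c > 0 it is tangent to the lower light cone at (0, 0, f(0)). -/
import Mathlib


open Real MeasureTheory Filter Set

/-- The derivative `h(t; H, c) = (H t² − c)/√(t² + (H t² − c)²)` of the profile curve of a
rotational spacelike surface with constant mean curvature `H` and first-integral constant `c`. -/
noncomputable def hfun (H c t : ℝ) : ℝ :=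
  (H * t ^ 2 - c) / Real.sqrt (t ^ 2 + (H * t ^ 2 - c) ^ 2)

/-- The profile function `f(t; H, c) = a + ∫_r^t h(s; H, c) ds` with initial value `f(r) = a`,
whose rotational graph `X(t, θ) = (t cos θ, t sin θ, f(t))` has constant mean curvature `H`. -/
noncomputable def ffun (H c r a t : ℝ) : ℝ :=
  a + ∫ s in r..t, hfun H c s

/-- Let `H ∈ ℝ` and `c ≠ 0`.  Then `lim_{t → 0⁺} h(t; H, c) = −c/|c|`; in particular
`lim_{t → 0⁺} f'(t; H, c)² = 1`, so the rotational surface has a conical-type singularity at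
the axis: if `c < 0` the surface is tangent to the upper light cone (limit slope `1`) and if
`c > 0` it is tangent to the lower light cone (limit slope `−1`). -/
theorem conical_singularity (H c : ℝ) (hc : c ≠ 0) :
    Tendsto (fun t => hfun H c t) (nhdsWithin 0 (Set.Ioi 0)) (nhds (-c / |c|)) ∧
    Tendsto (fun t => (hfun H c t) ^ 2) (nhdsWithin 0 (Set.Ioi 0)) (nhds 1) ∧
    (c < 0 → Tendsto (fun t => hfun H c t) (nhdsWithin 0 (Set.Ioi 0)) (nhds 1)) ∧
    (0 < c → Tendsto (fun t => hfun H c t) (nhdsWithin 0 (Set.Ioi 0)) (nhds (-1))) := by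
  have hca : (ContinuousAt (fun t => hfun H c t) 0) := by
    have hd : (0:ℝ) ^ 2 + (H * 0 ^ 2 - c) ^ 2 = c ^ 2 := by ring
    have hne : Real.sqrt ((0:ℝ) ^ 2 + (H * 0 ^ 2 - c) ^ 2) ≠ 0 := by
      rw [hd, Real.sqrt_sq_eq_abs]
      simpa using hc
    unfold hfun
    exact ContinuousAt.div (by fun_prop) ((Real.continuous_sqrt.continuousAt).comp
      (by fun_prop)) hne
  have hval : hfun H c 0 = -c / |c| := by
    have hd : (0:ℝ) ^ 2 + (H * 0 ^ 2 - c) ^ 2 = c ^ 2 := by ring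
    simp only [hfun, hd, Real.sqrt_sq_eq_abs]
    ring_nf
  have h1 : Tendsto (fun t => hfun H c t) (nhdsWithin 0 (Set.Ioi 0)) (nhds (-c / |c|)) := by
    rw [← hval]
    exact hca.continuousWithinAt.tendsto
  have hsq : (-c / |c|) ^ 2 = 1 := by
    rw [div_pow, neg_pow, sq_abs]
    simp [pow_ne_zero 2 hc]
  refine ⟨h1, ?_, ?_, ?_⟩
  · have := (h1.pow 2)
    rwa [hsq] at this
  · intro hneg
    have : -c / |c| = 1 := by
      rw [abs_of_neg hneg]; field_simp
    rwa [this] at h1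
  · intro hpos
    have : -c / |c| = -1 := by
      rw [abs_of_pos hpos]; field_simp
    rwa [this] at h1
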